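/- Let p > q ≥ 2 be coprime integers, set G = (p−1)(q−1), and let D ∈ ℤ[X] be the unique polynomial with (X^p − 1)·(X^q − 1)·D = (X^{pq} − 1)·(X − 1). Then for every natural number j < p, the coefficient of X^{G−j} in D equals 1 if j ≡ 0 (mod q), equals −1 if j ≡ 1 (mod q), and equals 0 otherwise. -/
import Mathlib

open Polynomial Finset

theorem stmt_1 (p q : ℕ) (hq : 2 ≤ q) (hqp : q < p) (hcop : Nat.Coprime p q)
    (D : Polynomial ℤ)
    (hD : (X ^ p - 1) * (X ^ q - 1) * D = (X ^ (p * q) - 1) * (X - 1))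
    (j : ℕ) (hj : j < p) :
    D.coeff ((p - 1) * (q - 1) - j) =
      if j % q = 0 then 1 else if j % q = 1 then -1 else 0 := by
  have hp0 : p ≠ 0 := by omega
  have hq0 : q ≠ 0 := by omega
  have mP : ((X : ℤ[X]) ^ p - 1).Monic := by simpa using monic_X_pow_sub_C (1:ℤ) hp0
  have mQ : ((X : ℤ[X]) ^ q - 1).Monic := by simpa using monic_X_pow_sub_C (1:ℤ) hq0
  have mPQ : ((X : ℤ[X]) ^ (p*q) - 1).Monic := by
    simpa using monic_X_pow_sub_C (1:ℤ) (by positivity : p*q ≠ 0)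
  have mOne : ((X : ℤ[X]) - 1).Monic := by simpa using monic_X_sub_C (1:ℤ)
  -- geometric sum identity
  have hgeom : ((X:ℤ[X]) ^ (p*q) - 1) = (X ^ q - 1) * ∑ i ∈ range p, X ^ (q * i) := by
    have h := geom_sum_mul ((X:ℤ[X]) ^ q) p
    simp only [← pow_mul] at h
    rw [mul_comm ((X:ℤ[X])^q - 1), h, mul_comm q p]
  -- cancel X^q - 1
  have key : (X ^ p - 1) * D = (∑ i ∈ range p, (X:ℤ[X]) ^ (q * i)) * (X - 1) := by
    apply mul_left_cancel₀ mQ.ne_zero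
    linear_combination hD + (X - 1 : ℤ[X]) * hgeom
  -- natDegree of D
  have hDne : D ≠ 0 := by
    intro h
    rw [h, mul_zero] at hD
    exact (mPQ.mul mOne).ne_zero hD.symm
  set G := (p - 1) * (q - 1) with hG
  have hpq1 : p * q + 1 = p + q + G := by
    obtain ⟨p', rfl⟩ : ∃ p', p = p' + 1 := ⟨p-1, by omega⟩
    obtain ⟨q', rfl⟩ : ∃ q', q = q' + 1 := ⟨q-1, by omega⟩
    simp only [hG, Nat.add_sub_cancel]
    ring
  have hdeg : D.natDegree = G := by
    have h1 := congrArg natDegree hD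
    rw [natDegree_mul (mul_ne_zero mP.ne_zero mQ.ne_zero) hDne,
        natDegree_mul mP.ne_zero mQ.ne_zero,
        natDegree_mul mPQ.ne_zero mOne.ne_zero] at h1
    have e1 : ((X : ℤ[X]) ^ p - 1).natDegree = p := by
      simpa using natDegree_X_pow_sub_C (n := p) (r := (1:ℤ))
    have e2 : ((X : ℤ[X]) ^ q - 1).natDegree = q := by
      simpa using natDegree_X_pow_sub_C (n := q) (r := (1:ℤ))
    have e3 : ((X : ℤ[X]) ^ (p*q) - 1).natDegree = p*q := by
      simpa using natDegree_X_pow_sub_C (n := p*q) (r := (1:ℤ))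
    have e4 : ((X : ℤ[X]) - 1).natDegree = 1 := by
      simpa using natDegree_X_sub_C (1:ℤ)
    rw [e1, e2, e3, e4] at h1
    omega
  have hvan : ∀ m, G < m → D.coeff m = 0 := fun m hm =>
    coeff_eq_zero_of_natDegree_lt (by omega)
  have hjG : j ≤ G := by
    have h1 : p - 1 ≤ (p-1) * (q-1) := Nat.le_mul_of_pos_right _ (by omega)
    omega
  have hGp : G + p = q * (p - 1) + 1 := by
    obtain ⟨p', rfl⟩ : ∃ p', p = p' + 1 := ⟨p-1, by omega⟩
    obtain ⟨q', rfl⟩ : ∃ q', q = q' + 1 := ⟨q-1, by omega⟩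
    simp only [hG, Nat.add_sub_cancel]
    ring
  -- extract the coefficient at G - j + p
  have hco := congrArg (fun f : ℤ[X] => f.coeff (G - j + p)) key
  simp only [sub_mul, one_mul, coeff_sub, coeff_X_pow_mul] at hco
  rw [hvan (G - j + p) (by omega), sub_zero] at hco
  rw [hco]
  -- expand the right-hand side coefficient
  set n := G - j + p with hn
  have hR : ((∑ i ∈ range p, (X:ℤ[X]) ^ (q*i)) * (X - 1)).coeff n
      = ∑ i ∈ range p, ((if n = q*i+1 then (1:ℤ) else 0) - (if n = q*i then 1 else 0)) := by
    rw [Finset.sum_mul, finset_sum_coeff]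
    refine Finset.sum_congr rfl fun i _ => ?_
    have h : (X:ℤ[X]) ^ (q*i) * (X - 1) = X ^ (q*i+1) - X ^ (q*i) := by ring
    rw [h, coeff_sub, coeff_X_pow, coeff_X_pow]
  rw [hR, Finset.sum_sub_distrib]
  -- arithmetic setup
  obtain ⟨t, r, hrq, hjtr⟩ : ∃ t r, r < q ∧ j = q*t + r :=
    ⟨j/q, j%q, Nat.mod_lt _ (by omega), (Nat.div_add_mod j q).symm⟩
  have hjmod : j % q = r := by
    rw [hjtr, Nat.mul_add_mod, Nat.mod_eq_of_lt hrq]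
  have htq : t ≤ q * t := Nat.le_mul_of_pos_left _ (by omega)
  have ht : t ≤ p - 1 := by omega
  obtain ⟨i0, hi0⟩ : ∃ i0, i0 = p - 1 - t := ⟨_, rfl⟩
  have hi0lt : i0 < p := by omega
  have hsplit : q * (p-1) = q * i0 + q * t := by
    have : p - 1 = i0 + t := by omega
    rw [this, Nat.mul_add]
  have hcancel : ∀ a b : ℕ, q * a = q * b → a = b := fun a b h =>
    Nat.eq_of_mul_eq_mul_left (by omega) h
  have hdvd : ∀ a b : ℕ, q ∣ (q*a - q*b) := fun a b =>
    Nat.dvd_sub (dvd_mul_right q a) (dvd_mul_right q b)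
  rw [hjmod]
  clear_value n G
  rcases Nat.lt_or_ge r 2 with hr2 | hr2
  · interval_cases r
    · -- r = 0 : answer 1
      have hn0 : n = q * i0 + 1 := by omega
      have e1 : (∑ i ∈ range p, if n = q*i+1 then (1:ℤ) else 0) = 1 := by
        have hcong : ∀ i ∈ range p, (if n = q*i+1 then (1:ℤ) else 0) = if i0 = i then 1 else 0 := by
          intro i _
          have hiff : n = q*i+1 ↔ i0 = i := by
            rw [hn0]
            constructor
            · intro h; exact hcancel _ _ (Nat.add_right_cancel h)
            · intro h; rw [h]
          simp only [hiff]
        rw [Finset.sum_congr rfl hcong, Finset.sum_ite_eq, if_pos (Finset.mem_range.2 hi0lt)]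
      have e2 : (∑ i ∈ range p, if n = q*i then (1:ℤ) else 0) = 0 := by
        apply Finset.sum_eq_zero
        intro i _
        rw [if_neg]
        intro h
        have h1 : q*i - q*i0 = 1 := by omega
        have := Nat.le_of_dvd (by omega) (h1 ▸ hdvd i i0)
        omega
      rw [e1, e2]; norm_num
    · -- r = 1 : answer -1
      have hn0 : n = q * i0 := by omega
      have e1 : (∑ i ∈ range p, if n = q*i+1 then (1:ℤ) else 0) = 0 := by
        apply Finset.sum_eq_zero
        intro i _
        rw [if_neg]
        intro h
        have h1 : q*i0 - q*i = 1 := by omega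
        have := Nat.le_of_dvd (by omega) (h1 ▸ hdvd i0 i)
        omega
      have e2 : (∑ i ∈ range p, if n = q*i then (1:ℤ) else 0) = 1 := by
        have hcong : ∀ i ∈ range p, (if n = q*i then (1:ℤ) else 0) = if i0 = i then 1 else 0 := by
          intro i _
          have hiff : n = q*i ↔ i0 = i := by
            rw [hn0]
            constructor
            · intro h; exact hcancel _ _ h
            · intro h; rw [h]
          simp only [hiff]
        rw [Finset.sum_congr rfl hcong, Finset.sum_ite_eq, if_pos (Finset.mem_range.2 hi0lt)]
      rw [e1, e2]; norm_num
  · -- r ≥ 2 : answer 0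
    have hr0 : ¬ (r = 0) := by omega
    have hr1 : ¬ (r = 1) := by omega
    rw [if_neg hr0, if_neg hr1]
    have hn0 : n + r = q * i0 + 1 := by omega
    have e1 : (∑ i ∈ range p, if n = q*i+1 then (1:ℤ) else 0) = 0 := by
      apply Finset.sum_eq_zero
      intro i _
      rw [if_neg]
      intro h
      have h1 : q*i0 - q*i = r := by omega
      have := Nat.le_of_dvd (by omega) (h1 ▸ hdvd i0 i)
      omega
    have e2 : (∑ i ∈ range p, if n = q*i then (1:ℤ) else 0) = 0 := by
      apply Finset.sum_eq_zero
      intro i _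
      rw [if_neg]
      intro h
      have h1 : q*i0 - q*i = r - 1 := by omega
      have := Nat.le_of_dvd (by omega) (h1 ▸ hdvd i0 i)
      omega
    rw [e1, e2]; norm_num
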